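/- Every (two-sided) group-e-semigroup is a group-e-homogroup: if (G,·,e,⊙) is a group-e-semigroup, then the semigroup (G,⊙) is a homogroup; in fact e⊙G = {e⊙x : x ∈ G} is an ideal of (G,⊙) that is a group under ⊙. -/
import Mathlib


/-- A subset `I` is an ideal of the semigroup `(G, op)`. -/
def IsMagmaIdeal {G : Type*} (op : G → G → G) (I : Set G) : Prop :=
  ∀ x : G, ∀ i ∈ I, op x i ∈ I ∧ op i x ∈ I

/-- A subset `H` is a subgroup of the semigroup `(G, op)`: it is closed under `op`
and forms a group under `op`. -/
def IsSubgroupUnder {G : Type*} (op : G → G → G) (H : Set G) : Prop :=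
  (∀ a ∈ H, ∀ b ∈ H, op a b ∈ H) ∧
  ∃ ι ∈ H, (∀ a ∈ H, op ι a = a ∧ op a ι = a) ∧
    ∀ a ∈ H, ∃ b ∈ H, op a b = ι ∧ op b a = ι

/-- Every (two-sided) group-`e`-semigroup is a group-`e`-homogroup:
if `(G, ·, e, ⊙)` satisfies both the left and right `e`-join laws (group identity
`e = 1`), then `e ⊙ G` is an ideal of `(G, ⊙)` that is a group under `⊙`,
so `(G, ⊙)` is a homogroup. -/
theorem stmt_4 {G : Type*} [Group G] (op : G → G → G)
    (hassoc : ∀ x y z : G, op (op x y) z = op x (op y z))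
    (hjoinL : ∀ x y : G, op 1 (x * y) = op 1 (op x y))
    (hjoinR : ∀ x y : G, op (x * y) 1 = op (op x y) 1) :
    IsMagmaIdeal op (Set.range (op 1)) ∧ IsSubgroupUnder op (Set.range (op 1)) := by
  -- (1 ⊙ x) ⊙ y = 1 ⊙ (x*y)
  have h1 : ∀ x y : G, op (op 1 x) y = op 1 (x * y) := by
    intro x y; rw [hassoc, ← hjoinL]
  -- x ⊙ (y ⊙ 1) = (x*y) ⊙ 1
  have h2 : ∀ x y : G, op x (op y 1) = op (x * y) 1 := by
    intro x y; rw [← hassoc, ← hjoinR]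
  -- x ⊙ 1 = 1 ⊙ x
  have h3 : ∀ x : G, op x 1 = op 1 x := by
    intro x
    have a : op (op 1 x) 1 = op 1 x := by rw [h1, mul_one]
    have b : op x 1 = op (op 1 x) 1 := by rw [← hjoinR 1 x, one_mul]
    rw [b, a]
  -- x ⊙ (1 ⊙ a) = 1 ⊙ (x*a)
  have h4 : ∀ x a : G, op x (op 1 a) = op 1 (x * a) := by
    intro x a; rw [← h3 a, h2, h3]
  -- 1 ⊙ (1 ⊙ z) = 1 ⊙ z
  have hff : ∀ z : G, op 1 (op 1 z) = op 1 z := by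
    intro z
    have := h4 1 z
    rw [one_mul] at this
    exact this
  -- (1 ⊙ a) ⊙ (1 ⊙ b) = 1 ⊙ (a*b)
  have h5 : ∀ a b : G, op (op 1 a) (op 1 b) = op 1 (a * b) := by
    intro a b
    rw [h1, hjoinL, h4, hff]
  constructor
  · intro x i hi
    obtain ⟨a, rfl⟩ := hi
    exact ⟨⟨x * a, (h4 x a).symm⟩, ⟨a * x, (h1 a x).symm⟩⟩
  · refine ⟨?_, op 1 1, ⟨1, rfl⟩, ?_, ?_⟩
    · rintro _ ⟨a, rfl⟩ _ ⟨b, rfl⟩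
      exact ⟨a * b, (h5 a b).symm⟩
    · rintro _ ⟨a, rfl⟩
      constructor
      · rw [h5, one_mul]
      · rw [h5, mul_one]
    · rintro _ ⟨a, rfl⟩
      exact ⟨op 1 a⁻¹, ⟨a⁻¹, rfl⟩, by rw [h5, mul_inv_cancel], by rw [h5, inv_mul_cancel]⟩
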